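/- For every natural number N > 0, divisor d with 2 ≤ d < 2^N, and dividend n with 0 ≤ n < 2^N, letting p = ⌈log₂ d⌉, m = ⌈2^(N+p)/d⌉, m_lo = m - 2^N, and q = ⌊m_lo · n / 2^N⌋, we have ⌊n/d⌋ = ⌊(⌊(n - q)/2⌋ + q)/2^(p-1)⌋. -/

import Mathlib

theorem stmt7 (N : ℕ) (hN : 0 < N) (d : ℕ) (hd1 : 2 ≤ d) (hd2 : d < 2 ^ N)
    (n : ℕ) (hn : n < 2 ^ N) (m : ℕ)
    (hm : (m : ℤ) = ⌈(2 : ℚ) ^ (N + Nat.clog 2 d) / d⌉) :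
    n / d = ((n - (m - 2 ^ N) * n / 2 ^ N) / 2 + (m - 2 ^ N) * n / 2 ^ N) /
      2 ^ (Nat.clog 2 d - 1) := by
  set p := Nat.clog 2 d with hp
  have hp1 : 1 ≤ p := Nat.clog_pos (by norm_num) hd1
  have hdp : d ≤ 2 ^ p := Nat.le_pow_clog (by norm_num) d
  have hdp2 : 2 ^ (p - 1) < d := by
    have := Nat.pow_pred_clog_lt_self (b := 2) (by norm_num) (x := d) hd1
    simpa [Nat.pred_eq_sub_one] using this
  have hd0 : 0 < d := by omega
  have hdQ : (0:ℚ) < d := by exact_mod_cast hd0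
  have hps : (2:ℕ) ^ p = 2 * 2 ^ (p - 1) := by
    conv_lhs => rw [show p = (p - 1) + 1 by omega]
    rw [pow_succ]; ring
  -- key bounds on m
  have h1 : 2 ^ (N + p) ≤ m * d := by
    have h := Int.le_ceil ((2:ℚ) ^ (N + p) / d)
    rw [← hm] at h
    push_cast at h
    rw [div_le_iff₀ hdQ] at h
    exact_mod_cast h
  have h2 : m * d < 2 ^ (N + p) + d := by
    have h := Int.ceil_lt_add_one ((2:ℚ) ^ (N + p) / d)
    rw [← hm] at h
    push_cast at h
    have h' : (m:ℚ) * d < ((2:ℚ) ^ (N + p) / d + 1) * d := by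
      exact mul_lt_mul_of_pos_right h hdQ
    rw [add_mul, div_mul_cancel₀ _ (ne_of_gt hdQ), one_mul] at h'
    exact_mod_cast h'
  have hpow : (2:ℕ) ^ (N + p) = 2 ^ N * 2 ^ p := pow_add 2 N p
  -- m ≥ 2^N
  have hmge : 2 ^ N ≤ m := by
    have : 2 ^ N * 2 ^ p ≤ m * 2 ^ p := by
      calc 2 ^ N * 2 ^ p = 2 ^ (N + p) := hpow.symm
        _ ≤ m * d := h1
        _ ≤ m * 2 ^ p := Nat.mul_le_mul_left m hdp
    exact Nat.le_of_mul_le_mul_right this (Nat.pow_pos (by norm_num : 0 < 2))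
  -- m < 2 * 2^N
  have hmlt : m < 2 * 2 ^ N := by
    by_contra hcon
    push_neg at hcon
    have e1 : 2 ^ (N + p) = 2 * 2 ^ N * 2 ^ (p - 1) := by
      rw [hpow, hps]; ring
    have hmd : 2 * 2 ^ N * d ≤ m * d := Nat.mul_le_mul_right d hcon
    have hbig : 2 * 2 ^ N * (2 ^ (p - 1) + 1) ≤ m * d := by
      calc 2 * 2 ^ N * (2 ^ (p - 1) + 1) ≤ 2 * 2 ^ N * d :=
            Nat.mul_le_mul_left _ (by omega)
        _ ≤ m * d := hmd
    rw [Nat.mul_add, ← e1, Nat.mul_one] at hbig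
    have hdlt : d < 2 * 2 ^ N := by omega
    linarith
  set L := m - 2 ^ N with hL
  have hmL : m = 2 ^ N + L := by omega
  have hLlt : L ≤ 2 ^ N := by omega
  set q := L * n / 2 ^ N with hq
  have hN0 : 0 < (2:ℕ) ^ N := Nat.pow_pos (by norm_num : 0 < 2)
  have hq_le : q ≤ n := by
    calc q = L * n / 2 ^ N := rfl
      _ ≤ 2 ^ N * n / 2 ^ N := Nat.div_le_div_right (Nat.mul_le_mul_right n hLlt)
      _ = n := Nat.mul_div_cancel_left n hN0
  -- step B: (n - q)/2 + q = (n + q)/2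
  have hB : (n - q) / 2 + q = (n + q) / 2 := by
    have h := Nat.add_mul_div_right (n - q) q (show 0 < 2 by norm_num)
    have e : n - q + q * 2 = n + q := by omega
    rw [e] at h
    omega
  -- step C: n + q = m * n / 2^N
  have hC : n + q = m * n / 2 ^ N := by
    have e : m * n = L * n + n * 2 ^ N := by rw [hmL]; ring
    rw [e, Nat.add_mul_div_right _ _ hN0, ← hq]
    omega
  -- step D+E: division chain
  have hD : ((n - q) / 2 + q) / 2 ^ (p - 1) = m * n / 2 ^ (N + p) := by
    rw [hB, hC, Nat.div_div_eq_div_mul, Nat.div_div_eq_div_mul]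
    congr 1
    rw [hpow, hps]; try ring
  rw [hD]
  -- step F: m * n / 2^(N+p) = n / d
  set k := n / d with hk
  have hkd : k * d ≤ n := Nat.div_mul_le_self n d
  have hkd2 : n < k * d + d := by
    calc n = d * k + n % d := (Nat.div_add_mod n d).symm
      _ < d * k + d := Nat.add_lt_add_left (Nat.mod_lt n hd0) _
      _ = k * d + d := by ring
  have hdn : d * n < 2 ^ (N + p) := by
    calc d * n < d * 2 ^ N := mul_lt_mul_of_pos_left hn hd0
      _ ≤ 2 ^ p * 2 ^ N := Nat.mul_le_mul_right _ hdp
      _ = 2 ^ (N + p) := by rw [hpow]; ring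
  symm
  apply Nat.div_eq_of_lt_le
  · calc k * 2 ^ (N + p) ≤ k * (m * d) := Nat.mul_le_mul_left k h1
      _ = m * (k * d) := by ring
      _ ≤ m * n := Nat.mul_le_mul_left m hkd
  · have key : m * n * d < (k + 1) * 2 ^ (N + p) * d := by
      calc m * n * d = m * d * n := by ring
        _ ≤ (2 ^ (N + p) + d - 1) * n :=
            Nat.mul_le_mul_right n (Nat.le_sub_one_of_lt h2)
        _ = 2 ^ (N + p) * n + (d - 1) * n := by
            rw [← Nat.add_mul]
            congr 1
            omega
        _ < 2 ^ (N + p) * n + 2 ^ (N + p) := by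
            have h3 : (d - 1) * n ≤ d * n := Nat.mul_le_mul_right n (by omega)
            have h4 : (d - 1) * n < 2 ^ (N + p) := by linarith
            linarith
        _ = 2 ^ (N + p) * (n + 1) := by ring
        _ ≤ 2 ^ (N + p) * ((k + 1) * d) := by
            apply Nat.mul_le_mul_left
            have e : (k + 1) * d = k * d + d := by ring
            linarith
        _ = (k + 1) * 2 ^ (N + p) * d := by ring
    exact Nat.lt_of_mul_lt_mul_right key
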